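/- Let R be a commutative ring, W a finite group acting on R by ring automorphisms, and suppose R is free of rank |W| over the invariant ring R^W with a basis (e_w)_{w ∈ W} such that det(v(e_w))_{v,w ∈ W} is a nonzerodivisor. Then the natural map R ⊗_{R^W} R → ∏_{w ∈ W} R, x ⊗ y ↦ (x · w(y))_w, is injective; in particular Spec(R ×_{Spec R^W} Spec R) contains the union of graphs of all w ∈ W as a closed subscheme whose ideal consists of nilpotents killed by the determinant condition, and if R is reduced and the determinant is a nonzerodivisor, R ⊗_{R^W} R is reduced. -/

import Mathlib

open scoped TensorProduct

/-- The invariant subring `R^W` of a ring `R` with an action of a group `W` by ring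
automorphisms. -/
def invariantSubring (W R : Type*) [Group W] [CommRing R] [MulSemiringAction W R] :
    Subring R where
  carrier := {x : R | ∀ w : W, w • x = x}
  mul_mem' := fun hx hy w => by rw [smul_mul', hx w, hy w]
  add_mem' := fun hx hy w => by rw [smul_add, hx w, hy w]
  one_mem' := fun w => smul_one w
  zero_mem' := fun w => smul_zero w
  neg_mem' := fun hx w => by rw [smul_neg, hx w]

/-- The natural map `R ⊗_{R^W} R → ∏_{w ∈ W} R`, `x ⊗ y ↦ (x · w(y))_w`. -/
noncomputable def tensorToPi (W R : Type*) [Group W] [CommRing R]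
    [MulSemiringAction W R] :
    R ⊗[invariantSubring W R] R →ₗ[invariantSubring W R] (W → R) :=
  TensorProduct.lift <| LinearMap.mk₂ (invariantSubring W R)
    (fun x y => fun w => x * w • y)
    (fun x x' y => by funext w; simp [add_mul])
    (fun c x y => by
      funext w
      show (c • x) * w • y = c • (x * w • y)
      rw [Algebra.smul_def, Algebra.smul_def, mul_assoc])
    (fun x y y' => by funext w; simp [smul_add, mul_add])
    (fun c x y => by
      funext w
      show x * w • (c • y) = c • (x * w • y)
      rw [Algebra.smul_def, Algebra.smul_def]
      show x * w • ((c : R) * y) = (c : R) * (x * w • y)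
      rw [smul_mul', c.2 w]
      ring)


section Aux
variable (W R : Type*) [Group W] [CommRing R] [MulSemiringAction W R]

/-- For `w : W`, the action of `w` as an `R^W`-algebra endomorphism of `R`. -/
def actAlgHom (w : W) : R →ₐ[invariantSubring W R] R where
  toFun := fun y => w • y
  map_one' := smul_one w
  map_mul' := fun x y => smul_mul' w x y
  map_zero' := smul_zero w
  map_add' := fun x y => smul_add w x y
  commutes' := fun c => c.2 w

/-- The ring-hom version of `tensorToPi`. -/
noncomputable def tensorToPiAlg :
    R ⊗[invariantSubring W R] R →ₐ[invariantSubring W R] (W → R) :=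
  Algebra.TensorProduct.productMap
    (Pi.algHom _ _ (fun _ => AlgHom.id (invariantSubring W R) R))
    (Pi.algHom _ _ (fun w => actAlgHom W R w))

lemma tensorToPi_eq_alg :
    ⇑(tensorToPi W R) = ⇑(tensorToPiAlg W R) := by
  have : tensorToPi W R = (tensorToPiAlg W R).toLinearMap := by
    apply TensorProduct.ext'
    intro x y
    rfl
  rw [this]; rfl

end Aux

/-- (Pittie–Steinberg-type statement.)  Let `R` be a commutative ring with
an action of a finite group `W` by ring automorphisms, and suppose `R` is free of rank
`|W|` over `R^W` with a basis `(e_w)_{w ∈ W}` such that `det (v(e_w))_{v,w}` is a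
nonzerodivisor.  Then the natural map `R ⊗_{R^W} R → ∏_{w ∈ W} R`, `x ⊗ y ↦ (x · w(y))_w`
is injective — so `Spec (R ⊗_{R^W} R)` contains the union of the graphs of the elements of
`W` as a closed subscheme with nilpotent-free discrepancy — and if moreover `R` is
reduced, then `R ⊗_{R^W} R` is reduced. -/
theorem stmt11 {W R : Type*} [Group W] [Fintype W] [DecidableEq W] [CommRing R]
    [MulSemiringAction W R]
    (e : W → R) (b : Module.Basis W (invariantSubring W R) R) (hb : ∀ w : W, b w = e w)
    (hdet : (Matrix.of fun v w : W => v • e w).det ∈ nonZeroDivisors R) :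
    Function.Injective (tensorToPi W R) ∧
      (IsReduced R → IsReduced (R ⊗[invariantSubring W R] R)) := by
  classical
  set M : Matrix W W R := Matrix.of fun v w : W => v • e w with hM
  have key : Function.Injective (tensorToPi W R) := by
    rw [injective_iff_map_eq_zero]
    intro z hz
    set B : Module.Basis W R (R ⊗[invariantSubring W R] R) := b.baseChange R with hB
    set c : W → R := fun w => B.repr z w with hc
    have hzsum : z = ∑ w : W, (c w) ⊗ₜ[invariantSubring W R] (b w) := by
      conv_lhs => rw [← B.sum_repr z]
      refine Finset.sum_congr rfl fun w _ => ?_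
      rw [hB, Module.Basis.baseChange_apply, TensorProduct.smul_tmul', smul_eq_mul, mul_one]
    have hcomp : ∀ v : W, M.mulVec c v = 0 := by
      intro v
      have h1 : tensorToPi W R z v = 0 := by rw [hz]; rfl
      rw [hzsum] at h1
      rw [map_sum] at h1
      have h2 : (∑ w : W, tensorToPi W R ((c w) ⊗ₜ[invariantSubring W R] (b w))) v = 0 := h1
      rw [Finset.sum_apply] at h2
      have h3 : ∀ w : W, tensorToPi W R ((c w) ⊗ₜ[invariantSubring W R] (b w)) v = c w * v • e w := by
        intro w
        show c w * v • (b w) = c w * v • e w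
        rw [hb w]
      rw [Finset.sum_congr rfl fun w _ => h3 w] at h2
      calc M.mulVec c v = ∑ w : W, (v • e w) * c w := rfl
        _ = ∑ w : W, c w * v • e w := by
            refine Finset.sum_congr rfl fun w _ => mul_comm _ _
        _ = 0 := h2
    have hc0 : ∀ w : W, c w = 0 := by
      have hmv : M.mulVec c = 0 := funext hcomp
      have h4 : M.det • c = 0 := by
        have := congrArg (M.adjugate.mulVec) hmv
        rwa [Matrix.mulVec_mulVec, Matrix.adjugate_mul, Matrix.smul_mulVec,
          Matrix.one_mulVec, Matrix.mulVec_zero] at this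
      intro w
      have : M.det * c w = 0 := congrFun h4 w
      exact hdet.2 _ (by rwa [mul_comm] at this)
    rw [hzsum]
    refine Finset.sum_eq_zero fun w _ => ?_
    rw [hc0 w, TensorProduct.zero_tmul]
  refine ⟨key, fun hred => ?_⟩
  have : Function.Injective (tensorToPiAlg W R) := by
    rw [← tensorToPi_eq_alg]; exact key
  exact isReduced_of_injective (tensorToPiAlg W R).toRingHom this
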